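/- Let φ be a tight inclusion of a persistence module M into a persistence module N over J, let a < t be elements of J, and assume N_t is finite-dimensional. Then dim Ṽ^M_t(a) − dim W̃^M_t(a) ≤ dim Ṽ^N_t(a) − dim W̃^N_t(a). (This is the key inequality showing that tight inclusions do not decrease the multiplicity of any right-infinite bar (a, sup J), hence induce inclusions of barcodes and persistence diagrams.) -/
import Mathlib


/-- A persistence module over a set `J ⊆ ℝ` of scales: a family of `F`-vector spaces
together with commuting linear bonding maps. -/
structure PersistenceModule (F : Type*) [Field F] (J : Set ℝ) where
  space : J → Type*
  [addCommGroup : ∀ r : J, AddCommGroup (space r)]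
  [module : ∀ r : J, Module F (space r)]
  bond : ∀ r r' : J, (r : ℝ) ≤ (r' : ℝ) → (space r →ₗ[F] space r')
  bond_refl : ∀ r : J, bond r r le_rfl = LinearMap.id
  bond_comp : ∀ (r r' r'' : J) (h : (r : ℝ) ≤ (r' : ℝ)) (h' : (r' : ℝ) ≤ (r'' : ℝ)),
    (bond r' r'' h').comp (bond r r' h) = bond r r'' (h.trans h')

attribute [instance] PersistenceModule.addCommGroup PersistenceModule.module

/-- An inclusion of persistence modules: a family of injective linear maps commuting
with the bonding maps. -/
structure PersistenceModule.Inclusion {F : Type*} [Field F] {J : Set ℝ}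
    (M N : PersistenceModule F J) where
  toFun : ∀ r : J, M.space r →ₗ[F] N.space r
  injective : ∀ r : J, Function.Injective (toFun r)
  comm : ∀ (r r' : J) (h : (r : ℝ) ≤ (r' : ℝ)),
    (toFun r').comp (M.bond r r' h) = (N.bond r r' h).comp (toFun r)

/-- An inclusion `φ` of persistence modules is *tight* if for all `r' < r` in `J`,
`φ_r(Im ρ^M_{r',r}) = (range φ_r) ∩ Im ρ^N_{r',r}`. -/
def PersistenceModule.Inclusion.Tight {F : Type*} [Field F] {J : Set ℝ}
    {M N : PersistenceModule F J} (φ : M.Inclusion N) : Prop :=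
  ∀ (r' r : J) (h : (r' : ℝ) < (r : ℝ)),
    (LinearMap.range (M.bond r' r h.le)).map (φ.toFun r) =
      LinearMap.range (φ.toFun r) ⊓ LinearMap.range (N.bond r' r h.le)

/-- `Ṽ^P_t(a) = ⋂_{s ∈ J, a < s < t} Im ρ^P_{s,t}`. -/
noncomputable def PersistenceModule.Vt {F : Type*} [Field F] {J : Set ℝ}
    (P : PersistenceModule F J) (a t : J) : Submodule F (P.space t) :=
  ⨅ s : J, ⨅ h : (a : ℝ) < (s : ℝ) ∧ (s : ℝ) < (t : ℝ),
    LinearMap.range (P.bond s t h.2.le)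

/-- `W̃^P_t(a) = Im ρ^P_{a,t} + (Ṽ^P_t(a) ∩ ⋂_{s ∈ J, s > t} ker ρ^P_{t,s})`. -/
noncomputable def PersistenceModule.Wt {F : Type*} [Field F] {J : Set ℝ}
    (P : PersistenceModule F J) (a t : J) (hat : (a : ℝ) < (t : ℝ)) :
    Submodule F (P.space t) :=
  LinearMap.range (P.bond a t hat.le) ⊔
    (P.Vt a t ⊓ ⨅ s : J, ⨅ h : (t : ℝ) < (s : ℝ), LinearMap.ker (P.bond t s h.le))

/-- Let `φ` be a tight inclusion of a persistence module `M` into a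
persistence module `N` over `J`, let `a < t` be elements of `J`, and assume `N_t` is
finite-dimensional. Then
`dim Ṽ^M_t(a) − dim W̃^M_t(a) ≤ dim Ṽ^N_t(a) − dim W̃^N_t(a)`,
i.e. tight inclusions do not decrease the multiplicity of right-infinite bars. -/
theorem multiplicity_infinite_bar_le_of_tight
    {F : Type*} [Field F] {J : Set ℝ} {M N : PersistenceModule F J}
    (φ : M.Inclusion N) (hφ : φ.Tight)
    (a t : J) (hat : (a : ℝ) < (t : ℝ))
    [FiniteDimensional F (N.space t)] :
    (Module.finrank F (M.Vt a t) : ℤ) - Module.finrank F (M.Wt a t hat) ≤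
      (Module.finrank F (N.Vt a t) : ℤ) - Module.finrank F (N.Wt a t hat) := by
  classical
  have hinj := φ.injective t
  haveI : FiniteDimensional F (M.space t) := FiniteDimensional.of_injective (φ.toFun t) hinj
  have bcompM : ∀ (r r' r'' : J) (h : (r : ℝ) ≤ (r' : ℝ))
      (h' : (r' : ℝ) ≤ (r'' : ℝ)) (x : M.space r),
      M.bond r' r'' h' (M.bond r r' h x) = M.bond r r'' (h.trans h') x :=
    fun r r' r'' h h' x => LinearMap.congr_fun (M.bond_comp r r' r'' h h') x
  have bcompN : ∀ (r r' r'' : J) (h : (r : ℝ) ≤ (r' : ℝ))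
      (h' : (r' : ℝ) ≤ (r'' : ℝ)) (x : N.space r),
      N.bond r' r'' h' (N.bond r r' h x) = N.bond r r'' (h.trans h') x :=
    fun r r' r'' h h' x => LinearMap.congr_fun (N.bond_comp r r' r'' h h') x
  have hcomm : ∀ (r r' : J) (h : (r : ℝ) ≤ (r' : ℝ)) (x : M.space r),
      φ.toFun r' (M.bond r r' h x) = N.bond r r' h (φ.toFun r x) :=
    fun r r' h x => LinearMap.congr_fun (φ.comm r r' h) x
  set KM : Submodule F (M.space t) :=
    ⨅ s : J, ⨅ h : (t : ℝ) < (s : ℝ), LinearMap.ker (M.bond t s h.le) with hKMdef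
  have hWMdef : M.Wt a t hat = LinearMap.range (M.bond a t hat.le) ⊔ (M.Vt a t ⊓ KM) := rfl
  have hImM : LinearMap.range (M.bond a t hat.le) ≤ M.Vt a t := by
    refine le_iInf fun s => le_iInf fun hs => ?_
    rintro x ⟨u, rfl⟩
    exact ⟨M.bond a s hs.1.le u, bcompM a s t hs.1.le hs.2.le u⟩
  have hImN : LinearMap.range (N.bond a t hat.le) ≤ N.Vt a t := by
    refine le_iInf fun s => le_iInf fun hs => ?_
    rintro x ⟨u, rfl⟩
    exact ⟨N.bond a s hs.1.le u, bcompN a s t hs.1.le hs.2.le u⟩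
  have hWM_le : M.Wt a t hat ≤ M.Vt a t := sup_le hImM inf_le_left
  have hWN_le : N.Wt a t hat ≤ N.Vt a t := sup_le hImN inf_le_left
  have hmapV : (M.Vt a t).map (φ.toFun t) ≤ N.Vt a t := by
    rintro _ ⟨x, hx, rfl⟩
    refine (Submodule.mem_iInf _).2 fun s => (Submodule.mem_iInf _).2 fun hs => ?_
    obtain ⟨u, hu⟩ := (Submodule.mem_iInf _).1 ((Submodule.mem_iInf _).1 hx s) hs
    exact ⟨φ.toFun s u, by rw [← hcomm s t hs.2.le u, hu]⟩
  have hmapW : (M.Wt a t hat).map (φ.toFun t) ≤ N.Wt a t hat := by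
    rw [hWMdef, Submodule.map_sup]
    refine sup_le ?_ (le_sup_of_le_right ?_)
    · rintro _ ⟨_, ⟨u, rfl⟩, rfl⟩
      exact Submodule.mem_sup_left ⟨φ.toFun a u, (hcomm a t hat.le u).symm⟩
    · rintro _ ⟨x, hx, rfl⟩
      obtain ⟨hxV, hxK⟩ := Submodule.mem_inf.1 hx
      refine Submodule.mem_inf.2 ⟨hmapV ⟨x, hxV, rfl⟩, ?_⟩
      refine (Submodule.mem_iInf _).2 fun s => (Submodule.mem_iInf _).2 fun hs => ?_
      have hx0 : M.bond t s hs.le x = 0 :=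
        LinearMap.mem_ker.1 ((Submodule.mem_iInf _).1 ((Submodule.mem_iInf _).1 hxK s) hs)
      rw [LinearMap.mem_ker, ← hcomm t s hs.le x, hx0, map_zero]
  have hcrux : ∀ y, y ∈ LinearMap.range (φ.toFun t) → y ∈ N.Wt a t hat →
      y ∈ (M.Wt a t hat).map (φ.toFun t) := by
    rintro _ ⟨x, rfl⟩ hyW
    have hyV : φ.toFun t x ∈ N.Vt a t := hWN_le hyW
    have hxV : x ∈ M.Vt a t := by
      refine (Submodule.mem_iInf _).2 fun s => (Submodule.mem_iInf _).2 fun hs => ?_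
      have h1 : φ.toFun t x ∈ (LinearMap.range (M.bond s t hs.2.le)).map (φ.toFun t) := by
        rw [hφ s t hs.2]
        exact Submodule.mem_inf.2 ⟨⟨x, rfl⟩, (Submodule.mem_iInf _).1 ((Submodule.mem_iInf _).1 hyV s) hs⟩
      obtain ⟨x', hx', hfx⟩ := h1
      rwa [← hinj hfx]
    obtain ⟨n, hn, w, hw, hnw⟩ := Submodule.mem_sup.1 hyW
    obtain ⟨u, hu⟩ := hn
    have hC : ∀ (s : J) (hs : (t : ℝ) < (s : ℝ)),
        x ∈ LinearMap.range (M.bond a t hat.le) ⊔ LinearMap.ker (M.bond t s hs.le) := by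
      intro s hs
      have hw0 : N.bond t s hs.le w = 0 :=
        LinearMap.mem_ker.1
          ((Submodule.mem_iInf _).1 ((Submodule.mem_iInf _).1 (Submodule.mem_inf.1 hw).2 s) hs)
      have e1 : φ.toFun s (M.bond t s hs.le x) = N.bond a s (hat.le.trans hs.le) u := by
        rw [hcomm t s hs.le x, ← hnw, map_add, hw0, add_zero, ← hu]
        exact bcompN a t s hat.le hs.le u
      have h2 : φ.toFun s (M.bond t s hs.le x) ∈
          (LinearMap.range (M.bond a s (hat.trans hs).le)).map (φ.toFun s) := by
        rw [hφ a s (hat.trans hs)]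
        exact Submodule.mem_inf.2 ⟨⟨_, rfl⟩, ⟨u, e1.symm⟩⟩
      obtain ⟨m, ⟨u', hu'⟩, hfm⟩ := h2
      have hm : M.bond a s (hat.trans hs).le u' = M.bond t s hs.le x := by
        rw [hu']; exact φ.injective s hfm
      refine Submodule.mem_sup.2
        ⟨M.bond a t hat.le u', ⟨u', rfl⟩, x - M.bond a t hat.le u', ?_, by abel⟩
      rw [LinearMap.mem_ker, map_sub, sub_eq_zero]
      rw [bcompM a t s hat.le hs.le u']
      exact hm.symm
    have hxW : x ∈ M.Wt a t hat := by
      by_cases hex : ∃ s : J, (t : ℝ) < (s : ℝ)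
      · obtain ⟨s1, hs1⟩ := hex
        obtain ⟨K0, hK0S, hmin⟩ := IsArtinian.set_has_minimal
          {K : Submodule F (M.space t) |
            ∃ s : J, ∃ hs : (t : ℝ) < (s : ℝ), K = LinearMap.ker (M.bond t s hs.le)}
          ⟨_, s1, hs1, rfl⟩
        obtain ⟨s0, hs0, hK0⟩ := hK0S
        have hker_mono : ∀ (s s' : J) (hts : (t : ℝ) < (s : ℝ)) (hts' : (t : ℝ) < (s' : ℝ))
            (hss : (s : ℝ) ≤ (s' : ℝ)),
            LinearMap.ker (M.bond t s hts.le) ≤ LinearMap.ker (M.bond t s' hts'.le) := by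
          intro s s' hts hts' hss z hz
          rw [LinearMap.mem_ker] at hz ⊢
          have h3 := bcompM t s s' hts.le hss z
          rw [hz, map_zero] at h3
          exact h3.symm
        have hK0le : ∀ (s : J) (hs : (t : ℝ) < (s : ℝ)),
            K0 ≤ LinearMap.ker (M.bond t s hs.le) := by
          intro s hs
          rcases le_total (s : ℝ) (s0 : ℝ) with hss | hss
          · have hle : LinearMap.ker (M.bond t s hs.le) ≤ K0 :=
              hK0 ▸ hker_mono s s0 hs hs0 hss
            have hne := hmin _ ⟨s, hs, rfl⟩
            exact (hle.lt_or_eq.resolve_left hne).ge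
          · exact hK0 ▸ hker_mono s0 s hs0 hs hss
        have hxK : x ∈ LinearMap.range (M.bond a t hat.le) ⊔ KM := by
          have h4 := hC s0 hs0
          rw [← hK0] at h4
          exact (sup_le_sup_left (le_iInf fun s => le_iInf fun hs => hK0le s hs) _) h4
        rw [hWMdef]
        have hmod : (LinearMap.range (M.bond a t hat.le) ⊔ KM) ⊓ M.Vt a t
            = LinearMap.range (M.bond a t hat.le) ⊔ (KM ⊓ M.Vt a t) :=
          sup_inf_assoc_of_le _ hImM
        have h5 : x ∈ LinearMap.range (M.bond a t hat.le) ⊔ (KM ⊓ M.Vt a t) := by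
          rw [← hmod]; exact Submodule.mem_inf.2 ⟨hxK, hxV⟩
        rwa [inf_comm] at h5
      · rw [hWMdef]
        refine Submodule.mem_sup_right (Submodule.mem_inf.2 ⟨hxV, ?_⟩)
        exact (Submodule.mem_iInf _).2 fun s => (Submodule.mem_iInf _).2 fun hs =>
          absurd ⟨s, hs⟩ hex
    exact ⟨x, hxW, rfl⟩
  have hE : (M.Vt a t).map (φ.toFun t) ⊓ N.Wt a t hat = (M.Wt a t hat).map (φ.toFun t) := by
    refine le_antisymm ?_ (le_inf (Submodule.map_mono hWM_le) hmapW)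
    intro y hy
    obtain ⟨hy1, hy2⟩ := Submodule.mem_inf.1 hy
    obtain ⟨x, hx, rfl⟩ := hy1
    exact hcrux _ ⟨x, rfl⟩ hy2
  have e1 : Module.finrank F (M.Vt a t) = Module.finrank F ((M.Vt a t).map (φ.toFun t)) :=
    (Submodule.equivMapOfInjective _ hinj _).finrank_eq
  have e2 : Module.finrank F (M.Wt a t hat) = Module.finrank F ((M.Wt a t hat).map (φ.toFun t)) :=
    (Submodule.equivMapOfInjective _ hinj _).finrank_eq
  have e3 := Submodule.finrank_sup_add_finrank_inf_eq
    ((M.Vt a t).map (φ.toFun t)) (N.Wt a t hat)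
  rw [hE] at e3
  have e4 : Module.finrank F ↥((M.Vt a t).map (φ.toFun t) ⊔ N.Wt a t hat)
      ≤ Module.finrank F (N.Vt a t) := Submodule.finrank_mono (sup_le hmapV hWN_le)
  omega
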